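/- Fix integers K ≥ 2, d ≥ 1, a real η with 0 < η < 1, set ρ = (1−η)/(K−1), and fix a real p ∈ [0,1]. In the development-set model with Kd labeled examples (d per class), if the per-class strict-majority probability Pl = P(c_{1,1} > c_{1,j} for all j ≠ 1) satisfies Pl^K ≥ p, then the probability that the identity is the unique bijection g maximizing the assignment score L_g = ∑_k c_{g(k),k} is at least p. -/

import Mathlib

open Finset MeasureTheory ProbabilityTheory

lemma prob_group_mem {K d : ℕ} {Ω : Type} [MeasurableSpace Ω] (P : Measure Ω)
    (X : Fin K × Fin d → Ω → Fin K)
    (hmeas : ∀ q, Measurable (X q))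
    (hindep : iIndepFun X P)
    (k : Fin K) (C : Finset (Fin d → Fin K)) :
    P {ω | (fun i => X (k, i) ω) ∈ C} =
      ∑ u ∈ C, ∏ i, P {ω | X (k, i) ω = u i} := by
  classical
  have hset : {ω | (fun i => X (k, i) ω) ∈ C}
      = ⋃ u ∈ C, ⋂ i, X (k, i) ⁻¹' {u i} := by
    ext ω
    simp only [Set.mem_setOf_eq, Set.mem_iUnion, Set.mem_iInter, Set.mem_preimage,
      Set.mem_singleton_iff]
    constructor
    · intro h; exact ⟨_, h, fun i => rfl⟩
    · rintro ⟨u, hu, h⟩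
      have : (fun i => X (k, i) ω) = u := funext h
      rwa [this]
  rw [hset, measure_biUnion_finset]
  · refine Finset.sum_congr rfl fun u _ => ?_
    have key := hindep.measure_inter_preimage_eq_mul
      (S := Finset.univ.map ⟨fun i : Fin d => (k, i),
        fun a b h => by simpa using congrArg Prod.snd h⟩)
      (sets := fun q => ({u q.2} : Set (Fin K)))
      (fun q _ => MeasurableSet.of_discrete)
    have hiInt : (⋂ q ∈ Finset.univ.map ⟨fun i : Fin d => (k, i),
        fun a b h => by simpa using congrArg Prod.snd h⟩, X q ⁻¹' {u q.2})
        = ⋂ i, X (k, i) ⁻¹' {u i} := by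
      ext ω
      constructor
      · intro h
        refine Set.mem_iInter.2 fun i => ?_
        exact Set.mem_iInter₂.1 h (k, i) (Finset.mem_map.2 ⟨i, Finset.mem_univ i, rfl⟩)
      · intro h
        refine Set.mem_iInter₂.2 fun q hq => ?_
        obtain ⟨i, -, rfl⟩ := Finset.mem_map.1 hq
        exact Set.mem_iInter.1 h i
    rw [hiInt] at key
    rw [key, Finset.prod_map]
    refine Finset.prod_congr rfl fun i _ => ?_
    have hpe : (X (k, i) ⁻¹' {u i}) = {ω | X (k, i) ω = u i} := by
      ext ω; simp
    show P (X (k, i) ⁻¹' {u i}) = P {ω | X (k, i) ω = u i}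
    rw [hpe]
  · intro u hu v hv huv
    have : ∃ i, u i ≠ v i := by
      by_contra h
      push_neg at h
      exact huv (funext h)
    obtain ⟨i, hi⟩ := this
    refine Set.disjoint_left.2 fun ω hω hω' => ?_
    have h1 : X (k, i) ω = u i := Set.mem_iInter.1 hω i
    have h2 : X (k, i) ω = v i := Set.mem_iInter.1 hω' i
    exact hi (h1 ▸ h2)
  · intro u hu
    exact MeasurableSet.iInter fun i => hmeas (k, i) (MeasurableSet.singleton _)

/-- Paper's Theorem 1 (second part): if the per-class strict-majority probability `Pl`
satisfies `Pl ^ K ≥ p`, then a development set of `d` examples per class produces the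
correct (identity) cluster-to-class mapping with probability at least `p`. -/
theorem dev_set_size_gives_correct_mapping
    (K d : ℕ) (hK : 2 ≤ K) (hd : 1 ≤ d)
    (η : ℝ) (hη0 : 0 < η) (hη1 : η < 1)
    (ρ : ℝ) (hρ : ρ = (1 - η) / ((K : ℝ) - 1))
    (p : ℝ) (hp0 : 0 ≤ p) (hp1 : p ≤ 1)
    {Ω : Type} [MeasurableSpace Ω] (P : Measure Ω) [IsProbabilityMeasure P]
    (X : Fin K × Fin d → Ω → Fin K)
    (hmeas : ∀ q, Measurable (X q))
    (hindep : iIndepFun X P)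
    (hdist : ∀ (k' : Fin K) (i : Fin d) (j : Fin K),
      P {ω | X (k', i) ω = j} = ENNReal.ofReal (if j = k' then η else ρ))
    (c : Fin K → Fin K → Ω → ℕ)
    (hc : ∀ k' j ω, c k' j ω = (univ.filter (fun i => X (k', i) ω = j)).card)
    (L : Equiv.Perm (Fin K) → Ω → ℕ)
    (hL : ∀ g ω, L g ω = ∑ k, c (g k) k ω)
    (Pl : ENNReal)
    (hPl : Pl = P {ω | ∀ j, j ≠ (⟨0, by omega⟩ : Fin K) →
        c ⟨0, by omega⟩ j ω < c ⟨0, by omega⟩ ⟨0, by omega⟩ ω})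
    (hPlp : Pl ^ K ≥ ENNReal.ofReal p) :
    P {ω | ∀ g : Equiv.Perm (Fin K), g ≠ 1 → L g ω < L 1 ω} ≥ ENNReal.ofReal p := by
  classical
  set z : Fin K := ⟨0, by omega⟩ with hzdef
  set cnt : (Fin d → Fin K) → Fin K → ℕ :=
    fun u j => (Finset.univ.filter (fun i => u i = j)).card with hcnt
  set cond : Fin K → (Fin d → Fin K) → Prop :=
    fun k u => ∀ j, j ≠ k → cnt u j < cnt u k with hcond
  set A : Fin K → Set Ω := fun k => {ω | cond k (fun i => X (k, i) ω)} with hAdef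
  have hA : ∀ k, A k = {ω | ∀ j, j ≠ k → c k j ω < c k k ω} := by
    intro k; ext ω
    simp only [hAdef, Set.mem_setOf_eq, hcond, hcnt, hc]
  -- Step 1: on ⋂ A k, identity is the unique maximizer
  have step1 : (⋂ k, A k) ⊆ {ω | ∀ g : Equiv.Perm (Fin K), g ≠ 1 → L g ω < L 1 ω} := by
    intro ω hω g hg
    have hA' : ∀ k j, j ≠ k → c k j ω < c k k ω := by
      intro k j hj
      have := Set.mem_iInter.1 hω k
      rw [hA k] at this
      exact this j hj
    have h1 : L 1 ω = ∑ k, c (g k) (g k) ω := by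
      rw [hL]
      simp only [Equiv.Perm.one_apply]
      exact (Equiv.sum_comp g (fun k => c k k ω)).symm
    rw [hL, h1]
    have hex : ∃ k, g k ≠ k := by
      by_contra h
      push_neg at h
      exact hg (Equiv.ext fun x => h x)
    obtain ⟨k0, hk0⟩ := hex
    refine Finset.sum_lt_sum (fun k _ => ?_) ⟨k0, Finset.mem_univ _, ?_⟩
    · rcases eq_or_ne (g k) k with h | h
      · rw [h]
      · exact le_of_lt (hA' (g k) k (Ne.symm h))
    · exact hA' (g k0) k0 (Ne.symm hk0)
  -- probability of each A k as an explicit finite sum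
  have calcP : ∀ k : Fin K, P (A k)
      = ∑ u ∈ Finset.univ.filter (cond k), ∏ i,
          ENNReal.ofReal (if u i = k then η else ρ) := by
    intro k
    have hsetA : A k = {ω | (fun i => X (k, i) ω) ∈ Finset.univ.filter (cond k)} := by
      ext ω; simp [hAdef]
    rw [hsetA, prob_group_mem P X hmeas hindep k]
    refine Finset.sum_congr rfl fun u _ => Finset.prod_congr rfl fun i _ => ?_
    exact hdist k i (u i)
  -- Step 3: by symmetry, every class has the same majority probability
  have key : ∀ k : Fin K, P (A k) = P (A z) := by
    intro k
    rw [calcP k, calcP z]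
    set σ : Equiv.Perm (Fin K) := Equiv.swap z k with hσ
    have hσz : σ z = k := Equiv.swap_apply_left z k
    have hσk : σ k = z := Equiv.swap_apply_right z k
    have hσσ : ∀ x, σ (σ x) = x := fun x => Equiv.swap_apply_self z k x
    have hσinj : Function.Injective σ := σ.injective
    have hcntσ : ∀ (u : Fin d → Fin K) (j : Fin K), cnt (σ ∘ u) j = cnt u (σ j) := by
      intro u j
      simp only [hcnt]
      congr 1
      ext i
      simp only [Finset.mem_filter, Finset.mem_univ, true_and, Function.comp_apply]
      constructor
      · intro h; rw [← h, hσσ]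
      · intro h; rw [h, hσσ]
    have hcondσ : ∀ u, cond k u ↔ cond z (σ ∘ u) := by
      intro u
      simp only [hcond]
      constructor
      · intro h j hj
        have hj' : σ j ≠ k := by
          intro hje
          exact hj (by rw [← hσσ j, hje, hσk])
        have := h (σ j) hj'
        rw [hcntσ, hcntσ, hσz]
        exact this
      · intro h j hj
        have hj' : σ j ≠ z := by
          intro hje
          exact hj (by rw [← hσσ j, hje, hσz])
        have := h (σ j) hj'
        rw [hcntσ, hcntσ, hσσ, hσz] at this
        exact this
    refine Finset.sum_nbij' (fun u => σ ∘ u) (fun u => σ ∘ u) ?_ ?_ ?_ ?_ ?_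
    · intro u hu
      simp only [Finset.mem_filter, Finset.mem_univ, true_and] at hu ⊢
      exact (hcondσ u).1 hu
    · intro u hu
      simp only [Finset.mem_filter, Finset.mem_univ, true_and] at hu ⊢
      have := (hcondσ (σ ∘ u)).2
      apply this
      have : σ ∘ σ ∘ u = u := by funext i; exact hσσ (u i)
      rwa [this]
    · intro u _; funext i; exact hσσ (u i)
    · intro u _; funext i; exact hσσ (u i)
    · intro u _
      refine Finset.prod_congr rfl fun i _ => ?_
      congr 1
      have : σ (u i) = z ↔ u i = k := by
        constructor
        · intro h; rw [← hσσ (u i), h, hσz]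
        · intro h; rw [h, hσk]
      simp only [Function.comp_apply]
      by_cases h : u i = k
      · rw [if_pos h, if_pos (this.2 h)]
      · rw [if_neg h, if_neg (fun hh => h (this.1 hh))]
  -- Step 2: independence across classes
  have step2 : ∀ s : Finset (Fin K), P (⋂ k ∈ (s : Set (Fin K)), A k) = ∏ k ∈ s, P (A k) := by
    intro s
    induction s using Finset.induction_on with
    | empty => simp
    | @insert a s' ha ih =>
      rw [Finset.coe_insert, Set.biInter_insert, Finset.prod_insert ha, ← ih]
      set S : Finset (Fin K × Fin d) := {a} ×ˢ Finset.univ with hS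
      set T : Finset (Fin K × Fin d) := s' ×ˢ Finset.univ with hT
      have hD : Disjoint S T := by
        rw [Finset.disjoint_left]
        rintro ⟨q1, q2⟩ hq hq'
        simp only [hS, hT, Finset.mem_product, Finset.mem_singleton, Finset.mem_univ,
          and_true] at hq hq'
        exact ha (hq ▸ hq')
      have hInd := hindep.indepFun_finset S T hD hmeas
      have hmemS : ∀ i : Fin d, (a, i) ∈ S := by
        intro i; rw [hS, Finset.mem_product]; exact ⟨Finset.mem_singleton_self a, Finset.mem_univ i⟩
      have hmemT : ∀ k, k ∈ s' → ∀ i : Fin d, (k, i) ∈ T := by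
        intro k hk i; rw [hT, Finset.mem_product]; exact ⟨hk, Finset.mem_univ i⟩
      set CS : Set ({q // q ∈ S} → Fin K) :=
        {v | cond a (fun i => v ⟨(a, i), hmemS i⟩)} with hCS
      set CT : Set ({q // q ∈ T} → Fin K) :=
        {v | ∀ k (hk : k ∈ s'), cond k (fun i => v ⟨(k, i), hmemT k hk i⟩)} with hCT
      have hSA : A a = (fun ω (q : {q // q ∈ S}) => X q ω) ⁻¹' CS := by
        ext ω
        simp only [hAdef, Set.mem_setOf_eq, Set.mem_preimage, hCS]
      have hTA : (⋂ k ∈ (s' : Set (Fin K)), A k)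
          = (fun ω (q : {q // q ∈ T}) => X q ω) ⁻¹' CT := by
        ext ω
        simp only [Set.mem_iInter, Set.mem_preimage, hCT, Set.mem_setOf_eq, hAdef,
          Finset.mem_coe]
      have hmCS : MeasurableSet CS := (Set.toFinite CS).measurableSet
      have hmCT : MeasurableSet CT := (Set.toFinite CT).measurableSet
      rw [hSA, hTA]
      exact hInd.measure_inter_preimage_eq_mul CS CT hmCS hmCT
  -- put everything together
  have hPlA : Pl = P (A z) := by rw [hPl, hA z]
  have hfinal : P (⋂ k, A k) = Pl ^ K := by
    have h1 : (⋂ k, A k) = ⋂ k ∈ ((Finset.univ : Finset (Fin K)) : Set (Fin K)), A k := by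
      simp
    rw [h1, step2 Finset.univ]
    have : ∀ k ∈ (Finset.univ : Finset (Fin K)), P (A k) = Pl := by
      intro k _; rw [key k, ← hPlA]
    rw [Finset.prod_congr rfl this, Finset.prod_const, Finset.card_univ, Fintype.card_fin]
  calc ENNReal.ofReal p ≤ Pl ^ K := hPlp
    _ = P (⋂ k, A k) := hfinal.symm
    _ ≤ P {ω | ∀ g : Equiv.Perm (Fin K), g ≠ 1 → L g ω < L 1 ω} := measure_mono step1
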